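/- Let (X,φ) be an expansive dynamical system with adapted metric. There exists ε₀ > 0 such that for all 0 < ε, ε′ ≤ ε₀ and all x ∈ X, the point (x,x) is in the interior of D_ε if and only if it is in the interior of D_{ε′}. -/

import Mathlib

open Filter Topology Set

namespace Paper

variable {X : Type*} [MetricSpace X] [CompactSpace X]

/-- The `n`-th iterate (for `n : ℤ`) of the homeomorphism `φ`. -/
def It (φ : X ≃ₜ X) (n : ℤ) : X → X := fun x => (φ.toEquiv ^ n) x

/-- The local stable set `Xˢ(x, ε)`. -/
def locS (φ : X ≃ₜ X) (x : X) (ε : ℝ) : Set X :=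
  {y | ∀ n : ℕ, dist (It φ n x) (It φ n y) ≤ ε}

/-- The local unstable set `Xᵘ(x, ε)`. -/
def locU (φ : X ≃ₜ X) (x : X) (ε : ℝ) : Set X :=
  {y | ∀ n : ℕ, dist (It φ (-(n : ℤ)) x) (It φ (-(n : ℤ)) y) ≤ ε}

/-- The set `D_ε` on which the bracket is defined. -/
def Dset (φ : X ≃ₜ X) (ε : ℝ) : Set (X × X) :=
  {p | (locS φ p.1 ε ∩ locU φ p.2 ε).Nonempty}

/-- `(X, φ)` is expansive with expansiveness constant `εX`. -/
def IsExpansive (φ : X ≃ₜ X) (εX : ℝ) : Prop :=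
  0 < εX ∧ ∀ x y : X, (∀ n : ℤ, dist (It φ n x) (It φ n y) ≤ εX) → x = y

/-- The metric is adapted (Fried), with constants `η` and `lam`. -/
def IsAdapted (φ : X ≃ₜ X) (η lam : ℝ) : Prop :=
  0 < η ∧ 0 < lam ∧ lam < 1 ∧
    (∀ x y : X, y ∈ locS φ x η → dist (φ x) (φ y) ≤ lam * dist x y) ∧
    (∀ x y : X, y ∈ locU φ x η → dist (φ.symm x) (φ.symm y) ≤ lam * dist x y)

/-- `p` is a periodic point of `φ`. -/
def IsPeriodic (φ : X ≃ₜ X) (p : X) : Prop :=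
  ∃ n : ℕ, 1 ≤ n ∧ It φ n p = p

/-- `x` is a synchronizing point: `(x, x)` is in the interior of `D_ε` for
some `0 < ε ≤ ε₀`. -/
def IsSyncPt (φ : X ≃ₜ X) (ε₀ : ℝ) (x : X) : Prop :=
  ∃ ε : ℝ, 0 < ε ∧ ε ≤ ε₀ ∧ (x, x) ∈ interior (Dset φ ε)

/-- `(X, φ)` is irreducible. -/
def Irred (φ : X ≃ₜ X) : Prop :=
  ∀ U V : Set X, IsOpen U → IsOpen V → U.Nonempty → V.Nonempty →
    ∃ n : ℕ, 0 < n ∧ (It φ n '' U ∩ V).Nonempty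

/-- `(X, φ)` is mixing. -/
def Mixing (φ : X ≃ₜ X) : Prop :=
  ∀ U V : Set X, IsOpen U → IsOpen V → U.Nonempty → V.Nonempty →
    ∃ N : ℕ, ∀ n : ℕ, N ≤ n → (It φ n '' U ∩ V).Nonempty

/-- Every point of `(X, φ)` is non-wandering. -/
def NonWandering (φ : X ≃ₜ X) : Prop :=
  ∀ x : X, ∀ U ∈ 𝓝 x, ∃ n : ℕ, 0 < n ∧ (It φ n '' U ∩ U).Nonempty

/-- Stable equivalence `x ∼ₛ y`. -/
def StableEq (φ : X ≃ₜ X) (x y : X) : Prop :=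
  Tendsto (fun n : ℕ => dist (It φ n x) (It φ n y)) atTop (𝓝 0)

/-- Unstable equivalence `x ∼ᵤ y`. -/
def UnstableEq (φ : X ≃ₜ X) (x y : X) : Prop :=
  Tendsto (fun n : ℕ => dist (It φ (-(n : ℤ)) x) (It φ (-(n : ℤ)) y)) atTop (𝓝 0)

/-- Local conjugacy `x ∼_lc y`: a homeomorphism `γ : U → V` of open
neighborhoods with `γ x = y` and `sup_{z ∈ U} d(φⁿ z, φⁿ (γ z)) → 0` as
`n → ±∞`. -/
def LocConj (φ : X ≃ₜ X) (x y : X) : Prop :=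
  ∃ (U V : Set X) (γ γinv : X → X),
    IsOpen U ∧ IsOpen V ∧ x ∈ U ∧ y ∈ V ∧ γ x = y ∧
    Set.MapsTo γ U V ∧ Set.MapsTo γinv V U ∧
    (∀ z ∈ U, γinv (γ z) = z) ∧ (∀ w ∈ V, γ (γinv w) = w) ∧
    ContinuousOn γ U ∧ ContinuousOn γinv V ∧
    (∀ ε : ℝ, 0 < ε → ∃ N : ℕ, ∀ n : ℤ, (N : ℤ) ≤ |n| → ∀ z ∈ U,
      dist (It φ n z) (It φ n (γ z)) ≤ ε)

/-- Stable local conjugacy `x ∼_lcs y`: a homeomorphism of `Xᵘ(x, δ)` onto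
its image in `Xᵘ(y, δ')` sending `x` to `y`, uniformly asymptotic in forward
time. -/
def StableLC (φ : X ≃ₜ X) (x y : X) : Prop :=
  ∃ (δ δ' : ℝ) (γ : X → X), 0 < δ ∧ 0 < δ' ∧
    Set.MapsTo γ (locU φ x δ) (locU φ y δ') ∧
    Set.InjOn γ (locU φ x δ) ∧ ContinuousOn γ (locU φ x δ) ∧ γ x = y ∧
    (∀ ε : ℝ, 0 < ε → ∃ N : ℕ, ∀ n : ℕ, N ≤ n → ∀ z ∈ locU φ x δ,
      dist (It φ n z) (It φ n (γ z)) ≤ ε)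

/-- Unstable local conjugacy `x ∼_lcu y`: a homeomorphism of `Xˢ(x, δ)` onto
its image in `Xˢ(y, δ')` sending `x` to `y`, uniformly asymptotic in backward
time. -/
def UnstableLC (φ : X ≃ₜ X) (x y : X) : Prop :=
  ∃ (δ δ' : ℝ) (γ : X → X), 0 < δ ∧ 0 < δ' ∧
    Set.MapsTo γ (locS φ x δ) (locS φ y δ') ∧
    Set.InjOn γ (locS φ x δ) ∧ ContinuousOn γ (locS φ x δ) ∧ γ x = y ∧
    (∀ ε : ℝ, 0 < ε → ∃ N : ℕ, ∀ n : ℕ, N ≤ n → ∀ z ∈ locS φ x δ,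
      dist (It φ (-(n : ℤ)) z) (It φ (-(n : ℤ)) (γ z)) ≤ ε)

set_option linter.unusedSectionVars false

lemma It_It (φ : X ≃ₜ X) (m n : ℤ) (x : X) : It φ m (It φ n x) = It φ (m + n) x := by
  simp [It, zpow_add, Equiv.Perm.inv_def]
lemma It_zero (φ : X ≃ₜ X) (x : X) : It φ 0 x = x := by simp [It]
lemma It_one_add (φ : X ≃ₜ X) (n : ℤ) (x : X) : It φ (1 + n) x = φ (It φ n x) := by
  simp [It, zpow_add, Equiv.Perm.inv_def]
lemma It_neg_one_add (φ : X ≃ₜ X) (n : ℤ) (x : X) : It φ (-1 + n) x = φ.symm (It φ n x) := by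
  simp [It, zpow_add, Equiv.Perm.inv_def]
lemma continuous_It (φ : X ≃ₜ X) (n : ℤ) : Continuous (It φ n) := by
  induction n using Int.induction_on with
  | zero =>
      have h : It φ 0 = id := funext (It_zero φ)
      rw [h]; exact continuous_id
  | succ k ih =>
      have h : It φ (k + 1) = fun x => φ (It φ k x) := by
        funext x; rw [show (k:ℤ) + 1 = 1 + k by ring, It_one_add]
      rw [h]; exact φ.continuous.comp ih
  | pred k ih =>
      have h : It φ (-k - 1) = fun x => φ.symm (It φ (-k) x) := by
        funext x; rw [show -(k:ℤ) - 1 = -1 + -k by ring, It_neg_one_add]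
      rw [h]; exact φ.symm.continuous.comp ih

lemma locS_mono (φ : X ≃ₜ X) (x : X) {ε ε' : ℝ} (h : ε ≤ ε') : locS φ x ε ⊆ locS φ x ε' :=
  fun _ hz n => (hz n).trans h
lemma locU_mono (φ : X ≃ₜ X) (x : X) {ε ε' : ℝ} (h : ε ≤ ε') : locU φ x ε ⊆ locU φ x ε' :=
  fun _ hz n => (hz n).trans h

lemma locS_shift (φ : X ≃ₜ X) {p z : X} {ε : ℝ} (hz : z ∈ locS φ p ε) (n : ℕ) :
    It φ n z ∈ locS φ (It φ n p) ε := by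
  intro m
  rw [It_It, It_It]
  have := hz (m + n)
  push_cast at this
  exact this

lemma locU_shift (φ : X ≃ₜ X) {p z : X} {ε : ℝ} (hz : z ∈ locU φ p ε) (n : ℕ) :
    It φ (-(n : ℤ)) z ∈ locU φ (It φ (-(n : ℤ)) p) ε := by
  intro m
  rw [It_It, It_It]
  have := hz (m + n)
  rw [show (-((m + n : ℕ) : ℤ)) = -(m : ℤ) + -(n : ℤ) by push_cast; ring] at this
  exact this

lemma stable_contract (φ : X ≃ₜ X) {η lam ε : ℝ} (had : IsAdapted φ η lam)
    (hεη : ε ≤ η) {p z : X} (hz : z ∈ locS φ p ε) :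
    ∀ n : ℕ, dist (It φ n p) (It φ n z) ≤ dist p z := by
  intro n
  induction n with
  | zero => simp [It_zero]
  | succ k ih =>
      have hk : It φ k z ∈ locS φ (It φ k p) η := locS_mono φ _ hεη (locS_shift φ hz k)
      have hstep := had.2.2.2.1 _ _ hk
      have e1 : It φ ((k + 1 : ℕ) : ℤ) p = φ (It φ k p) := by
        rw [show ((k + 1 : ℕ) : ℤ) = 1 + k by push_cast; ring, It_one_add]
      have e2 : It φ ((k + 1 : ℕ) : ℤ) z = φ (It φ k z) := by
        rw [show ((k + 1 : ℕ) : ℤ) = 1 + k by push_cast; ring, It_one_add]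
      rw [e1, e2]
      calc dist (φ (It φ k p)) (φ (It φ k z)) ≤ lam * dist (It φ k p) (It φ k z) := hstep
        _ ≤ 1 * dist p z := by
            apply mul_le_mul had.2.2.1.le ih dist_nonneg zero_le_one
        _ = dist p z := one_mul _

lemma unstable_contract (φ : X ≃ₜ X) {η lam ε : ℝ} (had : IsAdapted φ η lam)
    (hεη : ε ≤ η) {p z : X} (hz : z ∈ locU φ p ε) :
    ∀ n : ℕ, dist (It φ (-(n : ℤ)) p) (It φ (-(n : ℤ)) z) ≤ dist p z := by
  intro n
  induction n with
  | zero => simp [It_zero]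
  | succ k ih =>
      have hk : It φ (-(k : ℤ)) z ∈ locU φ (It φ (-(k : ℤ)) p) η :=
        locU_mono φ _ hεη (locU_shift φ hz k)
      have hstep := had.2.2.2.2 _ _ hk
      have e1 : ∀ w : X, It φ (-((k + 1 : ℕ) : ℤ)) w = φ.symm (It φ (-(k : ℤ)) w) := by
        intro w
        rw [show (-((k + 1 : ℕ) : ℤ)) = -1 + -(k : ℤ) by push_cast; ring, It_neg_one_add]
      rw [e1, e1]
      calc dist (φ.symm (It φ (-(k:ℤ)) p)) (φ.symm (It φ (-(k:ℤ)) z))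
          ≤ lam * dist (It φ (-(k:ℤ)) p) (It φ (-(k:ℤ)) z) := hstep
        _ ≤ 1 * dist p z := mul_le_mul had.2.2.1.le ih dist_nonneg zero_le_one
        _ = dist p z := one_mul _

lemma key_lemma (φ : X ≃ₜ X) {εX ε : ℝ} (hexp : IsExpansive φ εX) (hεX : ε ≤ εX)
    (x : X) {c : ℝ} (hc : 0 < c) :
    ∃ r : ℝ, 0 < r ∧ ∀ p q z : X, dist x p < r → dist x q < r →
      z ∈ locS φ p ε → z ∈ locU φ q ε → dist x z ≤ c := by
  by_contra hcon
  push_neg at hcon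
  have hch : ∀ k : ℕ, ∃ p q z : X, dist x p < 1 / (k + 1) ∧ dist x q < 1 / (k + 1) ∧
      z ∈ locS φ p ε ∧ z ∈ locU φ q ε ∧ c < dist x z := by
    intro k
    obtain ⟨p, q, z, h1, h2, h3, h4, h5⟩ := hcon (1 / (k + 1)) (by positivity)
    exact ⟨p, q, z, h1, h2, h3, h4, h5⟩
  choose p q z h1 h2 h3 h4 h5 using hch
  have hlim0 : Tendsto (fun k : ℕ => 1 / ((k : ℝ) + 1)) atTop (𝓝 0) :=
    tendsto_one_div_add_atTop_nhds_zero_nat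
  have hp : Tendsto p atTop (𝓝 x) := by
    rw [tendsto_iff_dist_tendsto_zero]
    exact squeeze_zero (fun k => dist_nonneg)
      (fun k => by rw [dist_comm]; exact (h1 k).le) hlim0
  have hq : Tendsto q atTop (𝓝 x) := by
    rw [tendsto_iff_dist_tendsto_zero]
    exact squeeze_zero (fun k => dist_nonneg)
      (fun k => by rw [dist_comm]; exact (h2 k).le) hlim0
  obtain ⟨zl, -, ψ, hψ, hzt⟩ := isCompact_univ.tendsto_subseq (fun k => mem_univ (z k))
  have hbound : ∀ n : ℤ, dist (It φ n x) (It φ n zl) ≤ ε := by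
    intro n
    rcases le_or_gt 0 n with hn | hn
    · lift n to ℕ using hn
      have hlim : Tendsto (fun k => dist (It φ n (p (ψ k))) (It φ n (z (ψ k)))) atTop
          (𝓝 (dist (It φ n x) (It φ n zl))) :=
        Tendsto.dist
          (((continuous_It φ n).tendsto x).comp (hp.comp hψ.tendsto_atTop))
          (((continuous_It φ n).tendsto zl).comp hzt)
      exact le_of_tendsto hlim (Eventually.of_forall (fun k => h3 (ψ k) n))
    · have hn' : n = -(((-n).toNat : ℕ) : ℤ) := by
        rw [Int.toNat_of_nonneg (by omega)]; ring
      rw [hn']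
      set m := (-n).toNat
      have hlim : Tendsto (fun k => dist (It φ (-(m:ℤ)) (q (ψ k))) (It φ (-(m:ℤ)) (z (ψ k)))) atTop
          (𝓝 (dist (It φ (-(m:ℤ)) x) (It φ (-(m:ℤ)) zl))) :=
        Tendsto.dist
          (((continuous_It φ (-(m:ℤ))).tendsto x).comp (hq.comp hψ.tendsto_atTop))
          (((continuous_It φ (-(m:ℤ))).tendsto zl).comp hzt)
      exact le_of_tendsto hlim (Eventually.of_forall (fun k => h4 (ψ k) m))
  have hzx : x = zl := hexp.2 x zl (fun n => (hbound n).trans hεX)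
  have hlim2 : Tendsto (fun k => dist x (z (ψ k))) atTop (𝓝 (dist x zl)) :=
    Tendsto.dist tendsto_const_nhds hzt
  have hcz : c ≤ dist x zl :=
    ge_of_tendsto hlim2 (Eventually.of_forall (fun k => (h5 (ψ k)).le))
  rw [← hzx, dist_self] at hcz
  linarith

/-- there is `ε₀ > 0` such that membership of `(x,x)` in the
interior of `D_ε` is independent of `ε ∈ (0, ε₀]`. -/
theorem exists_eps0_interior_Dset_indep (φ : X ≃ₜ X) (εX η lam : ℝ)
    (hexp : IsExpansive φ εX) (had : IsAdapted φ η lam) :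
    ∃ ε₀ : ℝ, 0 < ε₀ ∧ ∀ ε ε' : ℝ, 0 < ε → ε ≤ ε₀ → 0 < ε' → ε' ≤ ε₀ →
      ∀ x : X, ((x, x) ∈ interior (Dset φ ε) ↔ (x, x) ∈ interior (Dset φ ε')) := by
  refine ⟨min η εX, lt_min had.1 hexp.1, ?_⟩
  have main : ∀ ε ε' : ℝ, 0 < ε → ε ≤ min η εX → 0 < ε' → ∀ x : X,
      (x, x) ∈ interior (Dset φ ε) → (x, x) ∈ interior (Dset φ ε') := by
    intro ε ε' hε hεle hε' x hmem
    have hεη : ε ≤ η := hεle.trans (min_le_left _ _)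
    have hεX : ε ≤ εX := hεle.trans (min_le_right _ _)
    obtain ⟨r₀, hr₀, hball⟩ := Metric.mem_nhds_iff.1 (mem_interior_iff_mem_nhds.1 hmem)
    obtain ⟨r₁, hr₁, hkey⟩ := key_lemma φ hexp hεX x (c := ε' / 2) (by positivity)
    set r := min r₀ (min r₁ (ε' / 2)) with hr
    have hrpos : 0 < r := by positivity
    rw [mem_interior_iff_mem_nhds]
    refine Metric.mem_nhds_iff.2 ⟨r, hrpos, ?_⟩
    rintro ⟨u, v⟩ huv
    have hc : dist u x < r ∧ dist v x < r := by
      rw [Metric.mem_ball, Prod.dist_eq, max_lt_iff] at huv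
      exact huv
    have hDε : (u, v) ∈ Dset φ ε :=
      hball (Metric.ball_subset_ball (min_le_left _ _) huv)
    obtain ⟨zz, hzS, hzU⟩ := hDε
    have hru : dist x u < r₁ := by
      rw [dist_comm]
      exact hc.1.trans_le ((min_le_right _ _).trans (min_le_left _ _))
    have hrv : dist x v < r₁ := by
      rw [dist_comm]
      exact hc.2.trans_le ((min_le_right _ _).trans (min_le_left _ _))
    have hz : dist x zz ≤ ε' / 2 := hkey u v zz hru hrv hzS hzU
    have hru' : dist u x ≤ ε' / 2 :=
      hc.1.le.trans ((min_le_right _ _).trans (min_le_right _ _))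
    have hrv' : dist v x ≤ ε' / 2 :=
      hc.2.le.trans ((min_le_right _ _).trans (min_le_right _ _))
    have hdu : dist u zz ≤ ε' := by
      calc dist u zz ≤ dist u x + dist x zz := dist_triangle _ _ _
        _ ≤ ε' / 2 + ε' / 2 := add_le_add hru' hz
        _ = ε' := by ring
    have hdv : dist v zz ≤ ε' := by
      calc dist v zz ≤ dist v x + dist x zz := dist_triangle _ _ _
        _ ≤ ε' / 2 + ε' / 2 := add_le_add hrv' hz
        _ = ε' := by ring
    exact ⟨zz, fun n => (stable_contract φ had hεη hzS n).trans hdu,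
      fun n => (unstable_contract φ had hεη hzU n).trans hdv⟩
  intro ε ε' hε hεle hε' hε'le x
  exact ⟨main ε ε' hε hεle hε' x, main ε' ε hε' hε'le hε x⟩
end Paper
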